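/- Let F ⊆ [−1,1]^X, let α > 0, and suppose x*_1,…,x*_d ∈ X is α-shattered by F with witness s_1,…,s_d. Let T = k·d for a positive integer k and let the sequence x_1,…,x_T consist of k consecutive copies of each x*_i. Then for y_1,…,y_T drawn i.i.d. uniformly from {−1,1}, E_y[ sup_{f∈F} Σ_{t=1}^T y_t·f(x_t) ] ≥ (α·d/2)·E[ |Σ_{j=1}^k y_j| ] ≥ α·sqrt(T·d/8). -/

import Mathlib

open MeasureTheory Real Filter
open scoped Classical

namespace OLR

universe u

/-- Expectation of a real-valued function of a random seed. -/
noncomputable def expect {Ω : Type} {m : MeasurableSpace Ω} (μ : Measure Ω)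
    (g : Ω → ℝ) : ℝ :=
  ∫ ω, g ω ∂μ

/-- The real-valued sign `±1` encoded by a boolean. -/
def rsign (b : Bool) : ℝ := if b then 1 else -1

/-- All labels lie in `[0,1]`. -/
def Labels01 {T : ℕ} (y : Fin T → ℝ) : Prop := ∀ t, y t ∈ Set.Icc (0 : ℝ) 1

/-- The loss `ℓ` is `L`-Lipschitz in its first (prediction) argument. -/
def LipschitzLoss (ℓ : ℝ → ℝ → ℝ) (L : ℝ) : Prop :=
  ∀ a b y : ℝ, |ℓ a y - ℓ b y| ≤ L * |a - b|

/-- The loss `ℓ(·, y)` is convex for every label `y ∈ [0,1]`. -/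
def ConvexLoss (ℓ : ℝ → ℝ → ℝ) : Prop :=
  ∀ y ∈ Set.Icc (0 : ℝ) 1, ConvexOn ℝ (Set.Icc (0 : ℝ) 1) fun a => ℓ a y

/-- The loss `ℓ` maps `[0,1] × [0,1]` into `[0,1]`. -/
def LossRange01 (ℓ : ℝ → ℝ → ℝ) : Prop :=
  ∀ a y : ℝ, a ∈ Set.Icc (0 : ℝ) 1 → y ∈ Set.Icc (0 : ℝ) 1 → ℓ a y ∈ Set.Icc (0 : ℝ) 1

/-- A finite sequence `x : Fin d → X` is `α`-shattered by the class `F`: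
there is a witness `s` such that every sign pattern is realized with margin `α/2`. -/
def Shatters {X : Type u} (F : Set (X → ℝ)) (α : ℝ) {d : ℕ} (x : Fin d → X) : Prop :=
  ∃ s : Fin d → ℝ, ∀ σ : Fin d → Bool, ∃ f ∈ F, ∀ i : Fin d,
    (if σ i then f (x i) - s i else s i - f (x i)) ≥ α / 2

/-- The fat-shattering dimension of `F` at scale `α`. -/
noncomputable def fatDim {X : Type u} (F : Set (X → ℝ)) (α : ℝ) : ℕ∞ :=
  ⨆ d : {d : ℕ // ∃ x : Fin d → X, Shatters F α x}, (d.1 : ℕ∞)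

/-- A (randomized) transductive online learner over horizon `T`: it sees the whole
example sequence in advance, and in round `t` predicts from the examples, the labels
of rounds `s < t` (causality), and a private random seed. -/
structure TransLearner (X : Type u) (T : ℕ) where
  Ω : Type
  mΩ : MeasurableSpace Ω
  μ : @Measure Ω mΩ
  prob : @IsProbabilityMeasure Ω mΩ μ
  predict : (Fin T → X) → (Fin T → ℝ) → Fin T → Ω → ℝ
  causal : ∀ (x : Fin T → X) (y y' : Fin T → ℝ) (t : Fin T) (ω : Ω),
      (∀ s : Fin T, s < t → y s = y' s) → predict x y t ω = predict x y' t ω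

/-- Expected cumulative loss of a transductive learner on a stream. -/
noncomputable def transLoss {X : Type u} {T : ℕ} (ℓ : ℝ → ℝ → ℝ)
    (B : TransLearner X T) (x : Fin T → X) (y : Fin T → ℝ) : ℝ :=
  @expect B.Ω B.mΩ B.μ fun ω => ∑ t, ℓ (B.predict x y t ω) (y t)

/-- Cumulative loss of the best function of `F` in hindsight. -/
noncomputable def bestLoss {X : Type u} {T : ℕ} (ℓ : ℝ → ℝ → ℝ)
    (F : Set (X → ℝ)) (x : Fin T → X) (y : Fin T → ℝ) : ℝ :=
  ⨅ f : F, ∑ t, ℓ (f.1 (x t)) (y t)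

/-- Minimax expected regret of a transductive online learner `B`. -/
noncomputable def transMinimax {X : Type u} {T : ℕ} (ℓ : ℝ → ℝ → ℝ)
    (F : Set (X → ℝ)) (B : TransLearner X T) : ℝ :=
  ⨆ x : Fin T → X, ⨆ y : {y : Fin T → ℝ // Labels01 y},
    (transLoss ℓ B x y.1 - bestLoss ℓ F x y.1)

/-- Optimal (minimax) expected regret of transductive online regression. -/
noncomputable def transOpt (X : Type u) (T : ℕ) (ℓ : ℝ → ℝ → ℝ)
    (F : Set (X → ℝ)) : ℝ :=
  ⨅ B : TransLearner X T, transMinimax ℓ F B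

/-- Empirical Rademacher complexity of `F` on the sequence `x`. -/
noncomputable def radOn {X : Type u} {T : ℕ} (F : Set (X → ℝ)) (x : Fin T → X) : ℝ :=
  (∑ σ : Fin T → Bool, ⨆ f : F, (1 / (T : ℝ)) * ∑ t, rsign (σ t) * f.1 (x t)) / 2 ^ T

/-- (Worst-case) Rademacher complexity of `F` at horizon `T`. -/
noncomputable def radComplexity {X : Type u} (F : Set (X → ℝ)) (T : ℕ) : ℝ :=
  ⨆ x : Fin T → X, radOn F x

/-- A (randomized) Predictor over horizon `T`: after observing the first `t` examples
it predicts the entire sequence, using only those examples (causality) and a private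
random seed. -/
structure Predictor (X : Type u) (T : ℕ) where
  Ω : Type
  mΩ : MeasurableSpace Ω
  μ : @Measure Ω mΩ
  prob : @IsProbabilityMeasure Ω mΩ μ
  predict : ℕ → (Fin T → X) → Ω → Fin T → X
  causal : ∀ (t : ℕ) (x x' : Fin T → X) (ω : Ω),
      (∀ s : Fin T, (s : ℕ) < t → x s = x' s) → predict t x ω = predict t x' ω

/-- A Predictor is consistent if its prediction agrees with all examples observed so far. -/
def Predictor.Consistent {X : Type u} {T : ℕ} (P : Predictor X T) : Prop :=
  ∀ (t : ℕ) (x : Fin T → X) (ω : P.Ω) (s : Fin T), (s : ℕ) < t →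
    P.predict t x ω s = x s

/-- A Predictor is lazy if it keeps its prediction whenever it correctly predicted
the next example. -/
def Predictor.Lazy {X : Type u} {T : ℕ} (P : Predictor X T) : Prop :=
  ∀ (t : ℕ) (x : Fin T → X) (ω : P.Ω) (h : t < T),
    P.predict t x ω ⟨t, h⟩ = x ⟨t, h⟩ → P.predict (t + 1) x ω = P.predict t x ω

/-- A Predictor is `ε`-ball-lazy if it keeps its prediction whenever its prediction of
the next example is within distance `ε` of the true one. -/
def Predictor.EpsLazy {X : Type u} [PseudoMetricSpace X] {T : ℕ}
    (P : Predictor X T) (ε : ℝ) : Prop :=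
  ∀ (t : ℕ) (x : Fin T → X) (ω : P.Ω) (h : t < T),
    dist (P.predict t x ω ⟨t, h⟩) (x ⟨t, h⟩) ≤ ε →
      P.predict (t + 1) x ω = P.predict t x ω

/-- Expected number of zero-one mistakes of the Predictor on the example sequence `x`. -/
noncomputable def mistakes01 {X : Type u} {T : ℕ} (P : Predictor X T)
    (x : Fin T → X) : ℝ :=
  @expect P.Ω P.mΩ P.μ fun ω =>
    ∑ t : Fin T, if 1 ≤ (t : ℕ) ∧ P.predict (t : ℕ) x ω t ≠ x t then (1 : ℝ) else 0

/-- Expected number of `ε`-ball mistakes of the Predictor on the example sequence `x`. -/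
noncomputable def mistakesBall {X : Type u} [PseudoMetricSpace X] {T : ℕ}
    (P : Predictor X T) (ε : ℝ) (x : Fin T → X) : ℝ :=
  @expect P.Ω P.mΩ P.μ fun ω =>
    ∑ t : Fin T, if 1 ≤ (t : ℕ) ∧ ε ≤ dist (P.predict (t : ℕ) x ω t) (x t) then (1 : ℝ) else 0

/-- A (randomized) online learner with black-box access to the Predictor `P`: in round `t`
it predicts from the examples revealed so far (causality in `x` up to time `t`), the labels
of rounds `s < t`, its own random seed, and the Predictor's randomness (through which it can
query all of `P`'s predictions of future examples). -/
structure OnlineLearnerP {X : Type u} {T : ℕ} (P : Predictor X T) where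
  Ω : Type
  mΩ : MeasurableSpace Ω
  μ : @Measure Ω mΩ
  prob : @IsProbabilityMeasure Ω mΩ μ
  predict : (Fin T → X) → (Fin T → ℝ) → Fin T → Ω → P.Ω → ℝ
  causalX : ∀ (x x' : Fin T → X) (y : Fin T → ℝ) (t : Fin T) (ω : Ω) (ωP : P.Ω),
      (∀ s : Fin T, s ≤ t → x s = x' s) → predict x y t ω ωP = predict x' y t ω ωP
  causalY : ∀ (x : Fin T → X) (y y' : Fin T → ℝ) (t : Fin T) (ω : Ω) (ωP : P.Ω),
      (∀ s : Fin T, s < t → y s = y' s) → predict x y t ω ωP = predict x y' t ω ωP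

/-- Expected regret of an online learner (with Predictor access) on the stream `(x, y)`. -/
noncomputable def olPRegret {X : Type u} {T : ℕ} {P : Predictor X T}
    (ℓ : ℝ → ℝ → ℝ) (F : Set (X → ℝ)) (A : OnlineLearnerP P)
    (x : Fin T → X) (y : Fin T → ℝ) : ℝ :=
  (@expect P.Ω P.mΩ P.μ fun ωP =>
      @expect A.Ω A.mΩ A.μ fun ω => ∑ t, ℓ (A.predict x y t ω ωP) (y t))
    - bestLoss ℓ F x y

/-- Worst-case (over all streams with labels in `[0,1]`) expected regret of an online
learner with Predictor access. -/
noncomputable def olPSup {X : Type u} {T : ℕ} {P : Predictor X T}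
    (ℓ : ℝ → ℝ → ℝ) (F : Set (X → ℝ)) (A : OnlineLearnerP P) : ℝ :=
  ⨆ x : Fin T → X, ⨆ y : {y : Fin T → ℝ // Labels01 y}, olPRegret ℓ F A x y.1

/-- A (randomized) online learner in the standard (prediction-free) online setting. -/
structure OnlineLearner (X : Type u) (T : ℕ) where
  Ω : Type
  mΩ : MeasurableSpace Ω
  μ : @Measure Ω mΩ
  prob : @IsProbabilityMeasure Ω mΩ μ
  predict : (Fin T → X) → (Fin T → ℝ) → Fin T → Ω → ℝ
  causalX : ∀ (x x' : Fin T → X) (y : Fin T → ℝ) (t : Fin T) (ω : Ω),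
      (∀ s : Fin T, s ≤ t → x s = x' s) → predict x y t ω = predict x' y t ω
  causalY : ∀ (x : Fin T → X) (y y' : Fin T → ℝ) (t : Fin T) (ω : Ω),
      (∀ s : Fin T, s < t → y s = y' s) → predict x y t ω = predict x y' t ω

/-- Expected regret of a plain online learner on the stream `(x, y)`. -/
noncomputable def olRegret {X : Type u} {T : ℕ} (ℓ : ℝ → ℝ → ℝ)
    (F : Set (X → ℝ)) (A : OnlineLearner X T) (x : Fin T → X) (y : Fin T → ℝ) : ℝ :=
  (@expect A.Ω A.mΩ A.μ fun ω => ∑ t, ℓ (A.predict x y t ω) (y t)) - bestLoss ℓ F x y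

/-- Minimax expected regret of (adversarial) online regression, `R^ol(T, F)`. -/
noncomputable def olOpt (X : Type u) (T : ℕ) (ℓ : ℝ → ℝ → ℝ) (F : Set (X → ℝ)) : ℝ :=
  ⨅ A : OnlineLearner X T,
    ⨆ x : Fin T → X, ⨆ y : {y : Fin T → ℝ // Labels01 y}, olRegret ℓ F A x y.1

/-- The `k`-fold aggregated class `G(F_1, …, F_k)`. -/
def aggClass {X : Type u} {k : ℕ} (G : (Fin k → ℝ) → ℝ)
    (Fs : Fin k → Set (X → ℝ)) : Set (X → ℝ) :=
  {h | ∃ g : Fin k → X → ℝ, (∀ κ, g κ ∈ Fs κ) ∧ h = fun x => G fun κ => g κ x}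

/-- The aggregation mapping `G` commutes with shifts. -/
def CommutesWithShifts {k : ℕ} (G : (Fin k → ℝ) → ℝ) : Prop :=
  ∀ (v : Fin k → ℝ) (r : ℝ), G v - r = G fun κ => v κ - r

/-- The unit interval `[0,1]` as a type. -/
abbrev UnitInt : Type := ↥(Set.Icc (0 : ℝ) 1)

/-- The class of all functions `[0,1] → [0,1]` with total variation at most `V`. -/
def BVClass (V : ℝ) : Set (UnitInt → ℝ) :=
  {f | (∀ x, f x ∈ Set.Icc (0 : ℝ) 1) ∧ eVariationOn f Set.univ ≤ ENNReal.ofReal V}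

/-- The ramp function with foot `a` and shoulder `b`. -/
noncomputable def rampFn (a b : ℝ) (x : ℝ) : ℝ :=
  if x < a then 0 else if x ≤ b then (x - a) / (b - a) else 1

/-- The class of ramp functions of slope `M` on `[0,1]`. -/
noncomputable def RampClass (M : ℝ) : Set (UnitInt → ℝ) :=
  {f | ∃ a b : ℝ, 0 < a ∧ a < b ∧ b < 1 ∧ b = a + 1 / M ∧ ∀ x : UnitInt, f x = rampFn a b (x : ℝ)}


section AuxOLR
open Finset

lemma sum_eval {ι Z : Type*} [Fintype ι] [DecidableEq ι] [Fintype Z] (i : ι) (H : Z → ℝ) :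
    ∑ w : ι → Z, H (w i) =
      ((Fintype.card Z : ℝ))^(Fintype.card ι - 1) * ∑ z, H z := by
  have h1 : ∑ w : ι → Z, H (w i) = ∑ p : Z × ({ j // j ≠ i } → Z), H p.1 :=
    Fintype.sum_equiv (Equiv.funSplitAt i Z) _ _ (fun w => by simp)
  rw [h1, Fintype.sum_prod_type]
  have h2 : Fintype.card { j // j ≠ i } = Fintype.card ι - 1 := by
    have : Fintype.card { j // ¬ (j = i) } = Fintype.card ι - Fintype.card {j // j = i} :=
      Fintype.card_subtype_compl _
    simpa [Fintype.card_subtype_eq] using this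
  have h3 : (#(univ : Finset ({ j // j ≠ i } → Z)) : ℝ) = (Fintype.card Z : ℝ)^(Fintype.card ι - 1) := by
    rw [Finset.card_univ, Fintype.card_fun, h2]; push_cast; ring
  simp only [Finset.sum_const, nsmul_eq_mul, ← Finset.sum_mul]
  rw [mul_comm, ← h3, ← Finset.mul_sum, mul_comm]

lemma sum_rsign_count {n : ℕ} (y : Fin n → Bool) :
    ∑ j, rsign (y j) = 2 * ((univ.filter fun j => y j = true).card : ℝ) - n := by
  have : ∀ j, rsign (y j) = 2 * (if y j = true then (1:ℝ) else 0) - 1 := by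
    intro j; cases h : y j <;> simp [rsign, h] <;> norm_num
  rw [Finset.sum_congr rfl fun j _ => this j]
  rw [Finset.sum_sub_distrib, ← Finset.mul_sum, Finset.sum_boole]
  simp

lemma card_count {n m : ℕ} :
    (univ.filter fun y : Fin n → Bool => (univ.filter fun j => y j = true).card = m).card
      = n.choose m := by
  classical
  have hc : (Finset.powersetCard m (univ : Finset (Fin n))).card = n.choose m := by
    rw [Finset.card_powersetCard]; simp
  rw [← hc]
  · apply Finset.card_bij (fun y _ => univ.filter fun j => y j = true)
    · intro y hy
      simp only [Finset.mem_filter, Finset.mem_univ, true_and] at hy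
      simp [Finset.mem_powersetCard, hy]
    · intro y1 h1 y2 h2 h
      funext j
      have := Finset.ext_iff.1 h j
      simpa using this
    · intro s hs
      refine ⟨fun j => decide (j ∈ s), ?_, ?_⟩
      · simp only [Finset.mem_filter, Finset.mem_univ, true_and]
        rw [Finset.mem_powersetCard] at hs
        rw [← hs.2]; congr 1; ext j; simp
      · ext j; simp


noncomputable def Asum (k : ℕ) : ℝ := ∑ y : Fin k → Bool, |∑ j, rsign (y j)|
noncomputable def Zc (k : ℕ) : ℝ :=
  ∑ y : Fin k → Bool, if (∑ j, rsign (y j)) = 0 then (1:ℝ) else 0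

lemma sum_rsign_int {n : ℕ} (y : Fin n → Bool) : ∃ m : ℤ, ∑ j, rsign (y j) = m := by
  refine ⟨2 * ((univ.filter fun j => y j = true).card : ℤ) - n, ?_⟩
  rw [sum_rsign_count]; push_cast; ring

lemma abs_pm (S : ℝ) (hS : ∃ m : ℤ, S = m) :
    |S + 1| + |S - 1| = 2 * |S| + (if S = 0 then 2 else 0) := by
  obtain ⟨m, rfl⟩ := hS
  by_cases hm : m = 0
  · subst hm; norm_num
  · have h1 : (1:ℝ) ≤ |(m:ℝ)| := by
      rw [← Int.cast_abs]; exact_mod_cast Int.one_le_abs hm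
    rw [if_neg (by exact_mod_cast hm)]
    rcases le_total 0 ((m:ℝ)) with h | h
    · rw [abs_of_nonneg h] at h1
      rw [abs_of_nonneg h, abs_of_nonneg (by linarith), abs_of_nonneg (by linarith)]; ring
    · rw [abs_of_nonpos h] at h1
      rw [abs_of_nonpos h, abs_of_nonpos (by linarith), abs_of_nonpos (by linarith)]; ring

lemma Asum_succ (k : ℕ) : Asum (k + 1) = 2 * Asum k + 2 * Zc k := by
  classical
  have h1 : Asum (k+1) = ∑ p : Bool × (Fin k → Bool),
      |∑ j : Fin (k+1), rsign (Fin.cons (α := fun _ => Bool) p.1 p.2 j)| := by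
    rw [Asum]
    exact (Fintype.sum_equiv (Fin.consEquiv (fun _ : Fin (k+1) => Bool))
      (fun p : Bool × (Fin k → Bool) =>
        |∑ j : Fin (k+1), rsign (Fin.cons (α := fun _ => Bool) p.1 p.2 j)|)
      (fun y : Fin (k+1) → Bool => |∑ j, rsign (y j)|)
      (fun p => rfl)).symm
  have h2 : ∀ (b : Bool) (z : Fin k → Bool),
      ∑ j : Fin (k+1), rsign (Fin.cons (α := fun _ => Bool) b z j) = rsign b + ∑ j, rsign (z j) := by
    intro b z
    rw [Fin.sum_univ_succ]
    simp
  rw [h1, Fintype.sum_prod_type]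
  rw [Fintype.sum_bool]
  have h3 : ∀ z : Fin k → Bool,
      |∑ j, rsign (Fin.cons (α := fun _ => Bool) true z j)|
        + |∑ j, rsign (Fin.cons (α := fun _ => Bool) false z j)|
        = 2 * |∑ j, rsign (z j)| + (if (∑ j, rsign (z j)) = 0 then (2:ℝ) else 0) := by
    intro z
    rw [h2, h2]
    have h := abs_pm (∑ j, rsign (z j)) (sum_rsign_int z)
    have e1 : |rsign true + ∑ j, rsign (z j)| = |(∑ j, rsign (z j)) + 1| := by
      congr 1
      show (1:ℝ) + _ = _ + 1
      ring
    have e2 : |rsign false + ∑ j, rsign (z j)| = |(∑ j, rsign (z j)) - 1| := by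
      congr 1
      show (-1:ℝ) + _ = _ - 1
      ring
    rw [e1, e2, h]
  rw [← Finset.sum_add_distrib]
  rw [Finset.sum_congr rfl (fun z _ => h3 z), Finset.sum_add_distrib]
  congr 1
  · rw [Asum, Finset.mul_sum]
  · rw [Zc, Finset.mul_sum]
    apply Finset.sum_congr rfl
    intro z _
    split <;> ring

lemma Zc_odd (m : ℕ) : Zc (2 * m + 1) = 0 := by
  rw [Zc]
  apply Finset.sum_eq_zero
  intro y _
  rw [if_neg]
  rw [sum_rsign_count]
  intro h
  have : 2 * ((univ.filter fun j => y j = true).card : ℝ) = ((2*m+1 : ℕ) : ℝ) := by linarith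
  have : 2 * (univ.filter fun j => y j = true).card = 2*m+1 := by exact_mod_cast this
  omega

lemma Zc_even (m : ℕ) : Zc (2 * m) = (Nat.centralBinom m : ℝ) := by
  classical
  rw [Zc]
  have h : ∀ y : Fin (2*m) → Bool,
      ((∑ j, rsign (y j)) = 0) ↔ ((univ.filter fun j => y j = true).card = m) := by
    intro y
    rw [sum_rsign_count]
    constructor
    · intro h
      have : 2 * ((univ.filter fun j => y j = true).card : ℝ) = ((2*m : ℕ) : ℝ) := by linarith
      have : 2 * (univ.filter fun j => y j = true).card = 2*m := by exact_mod_cast this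
      omega
    · intro h; rw [h]; push_cast; ring
  rw [Finset.sum_congr rfl (fun y _ => by rw [if_congr (h y) rfl rfl])]
  rw [Finset.sum_boole, card_count, Nat.centralBinom]

lemma cb_sq (m : ℕ) (hm : 1 ≤ m) :
    (16:ℝ)^m ≤ 4 * m * ((Nat.centralBinom m : ℝ))^2 := by
  induction m, hm using Nat.le_induction with
  | base => norm_num [Nat.centralBinom]
  | succ n hn IH =>
    have key : ((n:ℝ) + 1) * (Nat.centralBinom (n+1) : ℝ)
        = 2 * (2 * n + 1) * (Nat.centralBinom n : ℝ) := by
      exact_mod_cast congrArg (Nat.cast : ℕ → ℝ) (Nat.succ_mul_centralBinom_succ n)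
    set x := (Nat.centralBinom n : ℝ) with hx
    set y := (Nat.centralBinom (n+1) : ℝ) with hy
    have key2 : ((n:ℝ) + 1)^2 * y^2 = (2 * (2 * (n:ℝ) + 1) * x)^2 := by
      rw [← mul_pow, key]
    have h16 : (16:ℝ)^(n+1) = 16 * 16^n := by rw [pow_succ]; ring
    have hn1 : (1:ℝ) ≤ (n:ℝ) := by exact_mod_cast hn
    have hpos : (0:ℝ) < ((n:ℝ) + 1)^2 := by positivity
    rw [h16]
    rw [← mul_le_mul_iff_right₀ hpos]
    push_cast
    have IH2 : ((n:ℝ)+1)^2 * (16:ℝ)^n ≤ ((n:ℝ)+1)^2 * (4*(n:ℝ)*x^2) := by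
      nlinarith [IH, sq_nonneg ((n:ℝ)+1)]
    have step2 : 16 * (((n:ℝ)+1)^2 * (4*(n:ℝ)*x^2)) ≤ ((n:ℝ)+1)^2 * (4*((n:ℝ)+1)*y^2) := by
      have hr : ((n:ℝ)+1)^2 * (4*((n:ℝ)+1)*y^2) = 4*((n:ℝ)+1)*(((n:ℝ)+1)^2*y^2) := by ring
      rw [hr, key2]
      nlinarith [mul_nonneg (sq_nonneg x) (show (0:ℝ) ≤ (n:ℝ)+1 by positivity)]
    nlinarith [IH2, step2]

lemma khintchine_aux (k : ℕ) (hk : 1 ≤ k) :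
    Real.sqrt ((((k-1)/2 : ℕ) : ℝ) + 1) ≤ Asum k / 2^k := by
  induction k, hk using Nat.le_induction with
  | base =>
    have h0 : ((1-1)/2 : ℕ) = 0 := by norm_num
    rw [h0]
    have hA : Asum 1 = 2 := by
      rw [Asum]
      have : ∀ y : Fin 1 → Bool, |∑ j, rsign (y j)| = 1 := by
        intro y; rw [Fin.sum_univ_one]; cases h : y 0 <;> simp [rsign, h]
      rw [Finset.sum_congr rfl (fun y _ => this y)]
      simp
    rw [hA]
    norm_num
  | succ k hk IH =>
    have hrec : Asum (k+1) / 2^(k+1) = Asum k / 2^k + Zc k / 2^k := by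
      rw [Asum_succ, pow_succ]
      field_simp
    rw [hrec]
    rcases Nat.even_or_odd k with ⟨m, hm⟩ | ⟨m, hm⟩
    · -- k = 2m even, m ≥ 1
      have hk2 : k = 2 * m := by omega
      have hm1 : 1 ≤ m := by omega
      subst hk2
      have hMold : ((2*m-1)/2 : ℕ) = m - 1 := by omega
      have hMnew : ((2*m+1-1)/2 : ℕ) = m := by omega
      rw [hMold] at IH
      rw [hMnew]
      have hcast : (((m-1 : ℕ)) : ℝ) + 1 = (m:ℝ) := by
        have : ((m-1 : ℕ) : ℝ) = (m:ℝ) - 1 := by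
          rw [Nat.cast_sub hm1, Nat.cast_one]
        rw [this]; ring
      rw [hcast] at IH
      have h4 : (2:ℝ)^(2*m) = 4^m := by
        rw [pow_mul]; norm_num
      rw [Zc_even, h4]
      rw [h4] at IH
      set u := Real.sqrt (m:ℝ) with hu
      have hmR : (1:ℝ) ≤ (m:ℝ) := by exact_mod_cast hm1
      have hupos : 0 < u := Real.sqrt_pos.2 (by linarith)
      have hu2 : u^2 = (m:ℝ) := Real.sq_sqrt (by linarith)
      have hcb : 1 / (2*u) ≤ (Nat.centralBinom m : ℝ) / 4^m := by
        have h1 := cb_sq m hm1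
        have h2 : (0:ℝ) < 4^m := by positivity
        have hc : (0:ℝ) ≤ (Nat.centralBinom m : ℝ) / 4^m := by positivity
        rw [div_le_div_iff₀ (by linarith) h2]
        have hA : (16:ℝ)^m = ((4:ℝ)^m)^2 := by
          rw [← pow_mul, mul_comm m 2, pow_mul]
          norm_num
        have hcpos : (0:ℝ) < (Nat.centralBinom m : ℝ) := by
          exact_mod_cast Nat.centralBinom_pos m
        nlinarith [h1, hu2, hA, h2, hcpos, hupos,
          mul_pos hupos hcpos]
      have hstep : Real.sqrt ((m:ℝ) + 1) ≤ u + 1/(2*u) := by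
        have h1 : ((m:ℝ) + 1) ≤ (u + 1/(2*u))^2 := by
          have : (u + 1/(2*u))^2 = u^2 + 1 + 1/(4*u^2) := by field_simp; ring
          rw [this, hu2]
          have h6 : (0:ℝ) < 1/(4*(m:ℝ)) := by
            apply div_pos one_pos; linarith
          linarith
        calc Real.sqrt ((m:ℝ)+1) ≤ Real.sqrt ((u + 1/(2*u))^2) := Real.sqrt_le_sqrt h1
          _ = u + 1/(2*u) := Real.sqrt_sq (by positivity)
      calc Real.sqrt ((m:ℝ)+1) ≤ u + 1/(2*u) := hstep
        _ ≤ Asum (2*m) / 4^m + (Nat.centralBinom m : ℝ)/4^m := add_le_add IH hcb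
    · -- k = 2m+1 odd
      have hk2 : k = 2 * m + 1 := by omega
      subst hk2
      rw [Zc_odd]
      have hMold : ((2*m+1-1)/2 : ℕ) = m := by omega
      have hMnew : ((2*m+1+1-1)/2 : ℕ) = m := by omega
      rw [hMold] at IH
      rw [hMnew]
      simpa using IH

lemma khintchine (k : ℕ) (hk : 0 < k) :
    Real.sqrt ((k:ℝ) / 2) ≤ Asum k / 2^k := by
  refine le_trans (Real.sqrt_le_sqrt ?_) (khintchine_aux k hk)
  have h : k ≤ 2 * ((k-1)/2) + 2 := by omega
  have : (k:ℝ) ≤ 2 * (((k-1)/2 : ℕ) : ℝ) + 2 := by exact_mod_cast h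
  linarith


def blockEquiv (k d : ℕ) (hk : 0 < k) : Fin d × Fin k ≃ Fin (k * d) where
  toFun p := ⟨p.1 * k + p.2, by
    have h1 := p.1.isLt
    have h2 := p.2.isLt
    calc (p.1 : ℕ) * k + p.2 < p.1 * k + k := by omega
      _ = ((p.1 : ℕ) + 1) * k := by ring
      _ ≤ d * k := Nat.mul_le_mul_right k h1
      _ = k * d := Nat.mul_comm d k⟩
  invFun t := (⟨t / k, by
      have h := t.isLt
      rw [Nat.div_lt_iff_lt_mul hk, Nat.mul_comm d k]
      exact h⟩, ⟨t % k, Nat.mod_lt _ hk⟩)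
  left_inv p := by
    have h2 := p.2.isLt
    have hd : ((p.1 : ℕ) * k + p.2) / k = p.1 := by
      rw [Nat.add_comm, Nat.add_mul_div_right _ _ hk, Nat.div_eq_of_lt h2]
      omega
    have hm : ((p.1 : ℕ) * k + p.2) % k = p.2 := by
      rw [Nat.add_comm, Nat.add_mul_mod_self_right, Nat.mod_eq_of_lt h2]
    ext
    · simp [hd]
    · simp [hm]
  right_inv t := by
    apply Fin.ext
    show (t : ℕ) / k * k + t % k = t
    calc (t : ℕ) / k * k + t % k = k * ((t : ℕ) / k) + t % k := by ring
      _ = t := Nat.div_add_mod t k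

lemma blockEquiv_div {k d : ℕ} (hk : 0 < k) (i : Fin d) (j : Fin k) :
    ((blockEquiv k d hk (i, j) : Fin (k*d)) : ℕ) / k = i := by
  show ((i : ℕ) * k + j) / k = i
  rw [Nat.add_comm, Nat.add_mul_div_right _ _ hk, Nat.div_eq_of_lt j.isLt]
  omega

def curryEquiv {k d : ℕ} (E : Fin d × Fin k ≃ Fin (k*d)) :
    (Fin d → Fin k → Bool) ≃ (Fin (k*d) → Bool) where
  toFun w := fun t => w (E.symm t).1 (E.symm t).2
  invFun y := fun i j => y (E (i, j))
  left_inv w := by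
    funext i j
    simp
  right_inv y := by
    funext t
    simp


end AuxOLR

/-- Anti-concentration lower bound on a shattered block sequence:
if `x*_1, …, x*_d` is `α`-shattered by a `[−1,1]`-valued class `F` with witness `s`,
`T = k d`, and `x` consists of `k` consecutive copies of each `x*_i`, then for uniform
i.i.d. signs `y`, `E_y[sup_{f ∈ F} Σ_t y_t f(x_t)] ≥ (α d / 2) E[|Σ_{j=1}^k y_j|]
≥ α √(T d / 8)` (the last step by Khintchine's inequality). -/
theorem stmt_18 (X : Type u) (F : Set (X → ℝ)) (hF : F.Nonempty)
    (hFrange : ∀ f ∈ F, ∀ x : X, f x ∈ Set.Icc (-1 : ℝ) 1)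
    (α : ℝ) (hα : 0 < α) (d k : ℕ) (hd : 0 < d) (hk : 0 < k)
    (xs : Fin d → X) (s : Fin d → ℝ)
    (hshat : ∀ σ : Fin d → Bool, ∃ f ∈ F, ∀ i : Fin d,
      (if σ i then f (xs i) - s i else s i - f (xs i)) ≥ α / 2)
    (T : ℕ) (hT : T = k * d)
    (x : Fin T → X)
    (hx : ∀ (t : Fin T) (i : Fin d), (t : ℕ) / k = (i : ℕ) → x t = xs i) :
    α * d / 2 * ((∑ y : Fin k → Bool, |∑ j, rsign (y j)|) / 2 ^ k) ≤
        (∑ y : Fin T → Bool, ⨆ f : F, ∑ t, rsign (y t) * f.1 (x t)) / 2 ^ T ∧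
      α * Real.sqrt ((T : ℝ) * d / 8) ≤
        α * d / 2 * ((∑ y : Fin k → Bool, |∑ j, rsign (y j)|) / 2 ^ k) := by
  classical
  haveI : Nonempty ↥F := hF.to_subtype
  subst hT
  set E := blockEquiv k d hk with hE
  set S : (Fin (k*d) → Bool) → Fin d → ℝ :=
    fun y i => ∑ j : Fin k, rsign (y (E (i, j))) with hSdef
  have hS : ∀ (y : Fin (k*d) → Bool) (i : Fin d),
      S y i = ∑ j : Fin k, rsign (y (E (i, j))) := fun _ _ => rfl
  have hEdiv : ∀ (i : Fin d) (j : Fin k), ((E (i, j) : Fin (k*d)) : ℕ) / k = i := by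
    intro i j
    rw [hE]
    exact blockEquiv_div hk i j
  have hxE : ∀ (i : Fin d) (j : Fin k), x (E (i, j)) = xs i := fun i j =>
    hx _ i (hEdiv i j)
  -- pointwise lower bound on the supremum
  have hpt : ∀ y : Fin (k*d) → Bool,
      (∑ i, S y i * s i) + α/2 * ∑ i, |S y i|
        ≤ ⨆ f : F, ∑ t, rsign (y t) * f.1 (x t) := by
    intro y
    obtain ⟨f, hfF, hf⟩ := hshat (fun i => decide (0 ≤ S y i))
    have hbdd : BddAbove (Set.range fun g : F => ∑ t, rsign (y t) * g.1 (x t)) := by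
      refine ⟨((k*d : ℕ) : ℝ), ?_⟩
      rintro r ⟨g, rfl⟩
      calc ∑ t, rsign (y t) * g.1 (x t) ≤ ∑ _t : Fin (k*d), (1:ℝ) := by
            apply Finset.sum_le_sum
            intro t _
            have h1 := hFrange g.1 g.2 (x t)
            have h2 : |rsign (y t) * g.1 (x t)| ≤ 1 := by
              rw [abs_mul]
              have h3 : |rsign (y t)| = 1 := by
                cases h : y t <;> simp [rsign, h]
              rw [h3, one_mul]
              exact abs_le.2 ⟨h1.1, h1.2⟩
            linarith [le_abs_self (rsign (y t) * g.1 (x t))]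
        _ = ((k*d : ℕ) : ℝ) := by simp
    have hle : ∑ t, rsign (y t) * f (x t) ≤ ⨆ g : F, ∑ t, rsign (y t) * g.1 (x t) :=
      le_ciSup hbdd (⟨f, hfF⟩ : F)
    refine le_trans ?_ hle
    have hsum : ∑ t, rsign (y t) * f (x t) = ∑ i, S y i * f (xs i) := by
      rw [← Fintype.sum_equiv E (fun p => rsign (y (E p)) * f (x (E p)))
            (fun t => rsign (y t) * f (x t)) (fun p => rfl)]
      rw [Fintype.sum_prod_type]
      apply Finset.sum_congr rfl
      intro i _
      rw [hS, Finset.sum_mul]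
      apply Finset.sum_congr rfl
      intro j _
      rw [hxE i j]
    rw [hsum, Finset.mul_sum, ← Finset.sum_add_distrib]
    apply Finset.sum_le_sum
    intro i _
    have h := hf i
    by_cases hpos : 0 ≤ S y i
    · rw [if_pos (by simpa using hpos)] at h
      have habs : |S y i| = S y i := abs_of_nonneg hpos
      rw [habs]
      nlinarith [h, hpos]
    · push_neg at hpos
      rw [if_neg (by simpa using not_le.2 hpos)] at h
      have habs : |S y i| = -S y i := abs_of_neg hpos
      rw [habs]
      nlinarith [h, hpos]
  -- expectations of the block sums
  have hsum1 : ∀ i : Fin d, ∑ y : Fin (k*d) → Bool, S y i = 0 := by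
    intro i
    have h0 : ∑ y : Fin (k*d) → Bool, S y i
        = ∑ j : Fin k, ∑ y : Fin (k*d) → Bool, rsign (y (E (i, j))) := by
      rw [Finset.sum_congr rfl (fun y _ => hS y i)]
      exact Finset.sum_comm
    rw [h0]
    apply Finset.sum_eq_zero
    intro j _
    rw [sum_eval (E (i, j)) rsign]
    simp [rsign]
  have hsum2 : ∀ i : Fin d, ∑ y : Fin (k*d) → Bool, |S y i|
      = ((2:ℝ)^k)^(d-1) * Asum k := by
    intro i
    have h1 : ∑ y : Fin (k*d) → Bool, |S y i|
        = ∑ w : Fin d → Fin k → Bool, |∑ j, rsign (w i j)| := by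
      rw [← Fintype.sum_equiv (curryEquiv E)
        (fun w => |S (curryEquiv E w) i|) (fun y => |S y i|) (fun w => rfl)]
      apply Finset.sum_congr rfl
      intro w _
      congr 1
      rw [hS]
      apply Finset.sum_congr rfl
      intro j _
      congr 1
      show w (E.symm (E (i, j))).1 (E.symm (E (i, j))).2 = w i j
      rw [Equiv.symm_apply_apply]
    rw [h1, sum_eval i (fun z : Fin k → Bool => |∑ j, rsign (z j)|)]
    have hc : ((Fintype.card (Fin k → Bool) : ℕ) : ℝ) = (2:ℝ)^k := by
      rw [Fintype.card_fun]
      push_cast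
      simp
    rw [Fintype.card_fin, hc, Asum]
  -- main expected lower bound
  have hmain : α/2 * ((d:ℝ) * (((2:ℝ)^k)^(d-1) * Asum k))
      ≤ ∑ y : Fin (k*d) → Bool, ⨆ f : F, ∑ t, rsign (y t) * f.1 (x t) := by
    have h1 : ∑ y : Fin (k*d) → Bool, ((∑ i, S y i * s i) + α/2 * ∑ i, |S y i|)
        ≤ ∑ y : Fin (k*d) → Bool, ⨆ f : F, ∑ t, rsign (y t) * f.1 (x t) :=
      Finset.sum_le_sum (fun y _ => hpt y)
    refine le_trans (le_of_eq ?_) h1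
    rw [Finset.sum_add_distrib]
    have h2 : ∑ y : Fin (k*d) → Bool, ∑ i, S y i * s i = 0 := by
      rw [Finset.sum_comm]
      apply Finset.sum_eq_zero
      intro i _
      rw [← Finset.sum_mul, hsum1 i, zero_mul]
    have h3 : ∑ y : Fin (k*d) → Bool, α/2 * ∑ i, |S y i|
        = α/2 * ((d:ℝ) * (((2:ℝ)^k)^(d-1) * Asum k)) := by
      rw [← Finset.mul_sum]
      congr 1
      rw [Finset.sum_comm, Finset.sum_congr rfl (fun i _ => hsum2 i), Finset.sum_const]
      simp [Finset.card_univ, nsmul_eq_mul]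
    rw [h2, h3, zero_add]
  have hAeq : (∑ y : Fin k → Bool, |∑ j, rsign (y j)|) = Asum k := rfl
  constructor
  · rw [hAeq, le_div_iff₀ (by positivity : (0:ℝ) < 2^(k*d))]
    have hpow : (2:ℝ)^(k*d) = ((2:ℝ)^k)^(d-1) * 2^k := by
      rw [pow_mul]
      conv_lhs => rw [show d = (d-1)+1 from (Nat.succ_pred_eq_of_pos hd).symm]
      rw [pow_succ]
    calc α * (d:ℝ) / 2 * (Asum k / 2^k) * 2^(k*d)
        = α/2 * ((d:ℝ) * (((2:ℝ)^k)^(d-1) * Asum k)) := by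
          rw [hpow]
          have h2k : (2:ℝ)^k ≠ 0 := by positivity
          field_simp
      _ ≤ _ := hmain
  · rw [hAeq]
    have hkh := khintchine k hk
    have heq : Real.sqrt (((k*d : ℕ):ℝ) * (d:ℝ) / 8)
        = Real.sqrt ((k:ℝ)/2) * ((d:ℝ)/2) := by
      have h8 : ((k*d : ℕ):ℝ) * (d:ℝ) / 8 = ((k:ℝ)/2) * (((d:ℝ)/2)^2) := by
        push_cast
        ring
      rw [h8, Real.sqrt_mul (by positivity), Real.sqrt_sq (by positivity)]
    calc α * Real.sqrt (((k*d : ℕ):ℝ) * (d:ℝ)/8)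
        = α * ((d:ℝ)/2) * Real.sqrt ((k:ℝ)/2) := by rw [heq]; ring
      _ ≤ α * ((d:ℝ)/2) * (Asum k / 2^k) := by
          apply mul_le_mul_of_nonneg_left hkh
          apply mul_nonneg hα.le
          positivity
      _ = α * (d:ℝ) / 2 * (Asum k / 2^k) := by ring


end OLR
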